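/- Let M and N be nonempty finite sets of complex numbers such that M is contained in the closed convex hull of N. Then max_{w ∈ M} min_{z ∈ N} |w − z| ≤ max_{z ∈ N} |z|, and equality holds if and only if 0 ∈ M and min_{z ∈ N} |z| = max_{z ∈ N} |z|. -/

import Mathlib

lemma key_exists (N : Finset ℂ) (w : ℂ) (hw : w ∈ convexHull ℝ (N : Set ℂ)) :
    ∃ z ∈ N, (‖w - z‖)^2 + (‖w‖)^2 ≤ (‖z‖)^2 := by
  rw [Finset.convexHull_eq] at hw
  obtain ⟨lam, hnn, hsum, hcm⟩ := hw
  rw [Finset.centerMass_eq_of_sum_1 _ _ hsum] at hcm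
  simp only [id] at hcm
  have h1 : ∑ z ∈ N, lam z * z.re = w.re := by
    rw [← hcm]; rw [Complex.re_sum]; simp [Complex.smul_re]
  have h2 : ∑ z ∈ N, lam z * z.im = w.im := by
    rw [← hcm]; rw [Complex.im_sum]; simp [Complex.smul_im]
  set g : ℂ → ℝ := fun z => (w.re - z.re) * w.re + (w.im - z.im) * w.im with hg
  have hsum0 : ∑ z ∈ N, lam z * g z = 0 := by
    have : ∑ z ∈ N, lam z * g z =
        (∑ z ∈ N, lam z) * (w.re * w.re + w.im * w.im)
          - ((∑ z ∈ N, lam z * z.re) * w.re + (∑ z ∈ N, lam z * z.im) * w.im) := by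
      rw [Finset.sum_mul, Finset.sum_mul, Finset.sum_mul, ← Finset.sum_add_distrib,
        ← Finset.sum_sub_distrib]
      apply Finset.sum_congr rfl
      intro z _; simp only [hg]; ring
    rw [this, hsum, h1, h2]; ring
  have hz : ∃ z ∈ N, g z ≤ 0 := by
    by_contra h
    push_neg at h
    have hpos : 0 < ∑ z ∈ N, lam z * g z := by
      apply Finset.sum_pos'
      · intro z hzN; exact mul_nonneg (hnn z hzN) (le_of_lt (h z hzN))
      · obtain ⟨z, hzN, hlz⟩ : ∃ z ∈ N, 0 < lam z := by
          by_contra h'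
          push_neg at h'
          have : ∑ z ∈ N, lam z ≤ 0 := Finset.sum_nonpos fun z hz => h' z hz
          linarith [hsum ▸ this]
        exact ⟨z, hzN, mul_pos hlz (h z hzN)⟩
    linarith
  obtain ⟨z, hzN, hgz⟩ := hz
  refine ⟨z, hzN, ?_⟩
  simp only [Complex.sq_norm, Complex.normSq_apply, Complex.sub_re, Complex.sub_im]
  simp only [hg] at hgz
  nlinarith [hgz]

/-- If `M` and `N` are nonempty finite sets of complex numbers with `M` contained in the
convex hull of `N`, then `max_{w ∈ M} min_{z ∈ N} |w - z| ≤ max_{z ∈ N} |z|`, with equality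
iff `0 ∈ M` and `min_{z ∈ N} |z| = max_{z ∈ N} |z|`. -/
theorem directed_hausdorff_le_max_abs (M N : Finset ℂ)
    (hM : M.Nonempty) (hN : N.Nonempty)
    (hMN : (M : Set ℂ) ⊆ convexHull ℝ (N : Set ℂ)) :
    M.sup' hM (fun w => N.inf' hN fun z => ‖w - z‖)
        ≤ N.sup' hN (fun z => ‖z‖) ∧
      (M.sup' hM (fun w => N.inf' hN fun z => ‖w - z‖)
          = N.sup' hN (fun z => ‖z‖) ↔
        (0 : ℂ) ∈ M ∧
          N.inf' hN (fun z => ‖z‖) = N.sup' hN (fun z => ‖z‖)) := by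
  set R := N.sup' hN (fun z => ‖z‖) with hR
  have hle : M.sup' hM (fun w => N.inf' hN fun z => ‖w - z‖) ≤ R := by
    apply Finset.sup'_le
    intro w hw
    obtain ⟨z, hzN, hkey⟩ := key_exists N w (hMN hw)
    have h1 : N.inf' hN (fun z => ‖w - z‖) ≤ ‖w - z‖ :=
      Finset.inf'_le _ hzN
    have h2 : ‖z‖ ≤ R := Finset.le_sup' _ hzN
    have h3 : ‖w - z‖ ≤ ‖z‖ := by
      nlinarith [norm_nonneg (w - z), norm_nonneg z, norm_nonneg w]
    linarith
  refine ⟨hle, ?_, ?_⟩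
  · intro heq
    obtain ⟨w, hwM, hw⟩ := Finset.exists_mem_eq_sup' hM
      (fun w => N.inf' hN fun z => ‖w - z‖)
    rw [hw] at heq
    obtain ⟨z, hzN, hkey⟩ := key_exists N w (hMN hwM)
    have h1 : R ≤ ‖w - z‖ := heq ▸ Finset.inf'_le _ hzN
    have h2 : ‖z‖ ≤ R := Finset.le_sup' _ hzN
    have hR0 : 0 ≤ R := le_trans (norm_nonneg z) h2
    have hw0 : w = 0 := by
      have hsq1 : R ^ 2 ≤ ‖w - z‖ ^ 2 := by nlinarith
      have hsq2 : ‖z‖ ^ 2 ≤ R ^ 2 := by nlinarith [norm_nonneg z]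
      have hw2 : ‖w‖ ^ 2 ≤ 0 := by linarith
      have : ‖w‖ = 0 := by
        have h0 : ‖w‖ ^ 2 = 0 := le_antisymm hw2 (sq_nonneg _)
        exact pow_eq_zero_iff (by norm_num) |>.mp h0
      simpa using this
    subst hw0
    constructor
    · exact hwM
    · have : N.inf' hN (fun z => ‖0 - z‖) =
          N.inf' hN (fun z => ‖z‖) := by
        apply Finset.inf'_congr _ rfl
        intro z _; simp
      rw [this] at heq
      exact heq
  · rintro ⟨h0M, hinf⟩
    have hge : R ≤ M.sup' hM (fun w => N.inf' hN fun z => ‖w - z‖) := by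
      have : N.inf' hN (fun z => ‖(0:ℂ) - z‖) = R := by
        rw [← hinf]
        apply Finset.inf'_congr _ rfl
        intro z _; simp
      calc R = N.inf' hN (fun z => ‖(0:ℂ) - z‖) := this.symm
        _ ≤ _ := by
          exact Finset.le_sup'
            (fun w => N.inf' hN fun z => ‖w - z‖) h0M
    linarith
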